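/- Let $(\Xi_l)_{l \geq L_0}$ be a sequence of independent integrable real-valued random variables with $\mathbb{E}[\Xi_l] = a_l - a_{l-1}$ for a real sequence $(a_l)_{l \geq L_0 - 1}$ with $a_{L_0-1} = 0$ and $a_l \to a$ as $l \to \infty$. Let $\mathbb{P}_L$ be a probability mass function on $\{L_0, L_0+1, \dots\}$ with $\mathbb{P}_L(l) > 0$ for all $l$, and let $L \sim \mathbb{P}_L$ be independent of $(\Xi_l)$. If $\sum_{l \geq L_0} \mathbb{E}[\Xi_l^2]/\mathbb{P}_L(l) < \infty$, then the estimator $\widehat{a} = \Xi_L / \mathbb{P}_L(L)$ satisfies $\mathbb{E}[\widehat{a}] = a$ and $\mathbb{E}[\widehat{a}^2] < \infty$. -/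

import Mathlib

open MeasureTheory ProbabilityTheory Filter

/-- Single-term randomized (Rhee–Glynn) estimator: unbiasedness and finite second moment. -/
theorem stmt0 {Ω : Type*} [MeasurableSpace Ω] (μ : Measure Ω) [IsProbabilityMeasure μ]
    (L0 : ℕ) (hL0 : 1 ≤ L0)
    (Ξ : ℕ → Ω → ℝ) (a : ℕ → ℝ) (alim : ℝ)
    (hmeas : ∀ l, Measurable (Ξ l))
    (hint : ∀ l, Integrable (Ξ l) μ)
    (hsq : ∀ l, MemLp (Ξ l) 2 μ)
    (hΞindep : iIndepFun Ξ μ)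
    (ha0 : a (L0 - 1) = 0)
    (hmean : ∀ l, L0 ≤ l → ∫ ω, Ξ l ω ∂μ = a l - a (l - 1))
    (halim : Tendsto a atTop (nhds alim))
    (pL : ℕ → ℝ)
    (hpLpos : ∀ l, L0 ≤ l → 0 < pL l)
    (hpLsum : (∑' l : {l : ℕ // L0 ≤ l}, pL l) = 1)
    (L : Ω → ℕ) (hLmeas : Measurable L)
    (hLsupp : ∀ ω, L0 ≤ L ω)
    (hLlaw : ∀ l, (μ (L ⁻¹' {l})).toReal = if L0 ≤ l then pL l else 0)
    (hLindep : IndepFun L (fun ω l => Ξ l ω) μ)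
    (hcond : Summable (fun l : ℕ =>
      if L0 ≤ l then (∫ ω, (Ξ l ω) ^ 2 ∂μ) / pL l else 0)) :
    (∫ ω, Ξ (L ω) ω / pL (L ω) ∂μ) = alim ∧
      Integrable (fun ω => (Ξ (L ω) ω / pL (L ω)) ^ 2) μ := by
  classical
  set A : ℕ → Set Ω := fun l => L ⁻¹' {l} with hA
  have hAmeas : ∀ l, MeasurableSet (A l) := fun l => hLmeas (measurableSet_singleton l)
  have hmemA : ∀ (ω : Ω) (l : ℕ), ω ∈ A l ↔ L ω = l := by
    intro ω l; simp [hA]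
  have hAdisj : Pairwise (Function.onFun Disjoint A) := by
    intro i j hij
    rw [Function.onFun, Set.disjoint_left]
    intro ω hi hj
    exact hij (((hmemA ω i).1 hi).symm.trans ((hmemA ω j).1 hj))
  have hAunion : (⋃ l, A l) = Set.univ :=
    Set.eq_univ_of_forall fun ω => Set.mem_iUnion.mpr ⟨L ω, (hmemA ω (L ω)).2 rfl⟩
  have hμA : ∀ l, (μ (A l)).toReal = if L0 ≤ l then pL l else 0 := hLlaw
  have hindepl : ∀ l, IndepFun L (Ξ l) μ := fun l =>
    hLindep.comp measurable_id (measurable_pi_apply l)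
  -- key independence identity
  have key : ∀ (l : ℕ) (ψ : ℝ → ℝ), Measurable ψ →
      ∫ ω in A l, ψ (Ξ l ω) ∂μ = (μ (A l)).toReal * ∫ ω, ψ (Ξ l ω) ∂μ := by
    intro l ψ hψ
    have hXmeas : Measurable fun ω => Set.indicator ({l} : Set ℕ) (fun _ => (1:ℝ)) (L ω) :=
      (measurable_const.indicator (measurableSet_singleton l)).comp hLmeas
    have hXY : IndepFun (fun ω => Set.indicator ({l} : Set ℕ) (fun _ => (1:ℝ)) (L ω))
        (fun ω => ψ (Ξ l ω)) μ :=
      (hindepl l).comp (measurable_const.indicator (measurableSet_singleton l)) hψ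
    have e1 : ∫ ω, Set.indicator ({l} : Set ℕ) (fun _ => (1:ℝ)) (L ω) * ψ (Ξ l ω) ∂μ
        = (∫ ω, Set.indicator ({l} : Set ℕ) (fun _ => (1:ℝ)) (L ω) ∂μ) * ∫ ω, ψ (Ξ l ω) ∂μ :=
      hXY.integral_fun_mul_eq_mul_integral hXmeas.aestronglyMeasurable (hψ.comp (hmeas l)).aestronglyMeasurable
    have h3 : ∫ ω in A l, ψ (Ξ l ω) ∂μ
        = ∫ ω, Set.indicator ({l} : Set ℕ) (fun _ => (1:ℝ)) (L ω) * ψ (Ξ l ω) ∂μ := by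
      rw [← integral_indicator (hAmeas l)]
      congr 1
      funext ω
      by_cases h : L ω = l <;> simp [hA, Set.indicator_apply, h]
    have h4 : ∫ ω, Set.indicator ({l} : Set ℕ) (fun _ => (1:ℝ)) (L ω) ∂μ = (μ (A l)).toReal := by
      have h5 : (fun ω => Set.indicator ({l} : Set ℕ) (fun _ => (1:ℝ)) (L ω))
          = (A l).indicator fun _ => (1:ℝ) := by
        funext ω
        by_cases h : L ω = l <;> simp [hA, Set.indicator_apply, h]
      rw [h5, integral_indicator_const _ (hAmeas l), smul_eq_mul, mul_one, measureReal_def]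
    rw [h3, e1, h4]
  -- integrability of the square on each piece
  have hg_on : ∀ l, IntegrableOn (fun ω => (Ξ (L ω) ω / pL (L ω)) ^ 2) (A l) μ := by
    intro l
    have h0 : Integrable (fun ω => (Ξ l ω / pL l) ^ 2) μ := by
      have h1 : Integrable (fun ω => Ξ l ω ^ 2 * (pL l ^ 2)⁻¹) μ :=
        ((hsq l).integrable_sq).mul_const _
      simpa [div_eq_mul_inv, mul_pow] using h1
    refine (h0.integrableOn).congr ?_
    filter_upwards [ae_restrict_mem (hAmeas l)] with ω hω
    have h2 : L ω = l := (hmemA ω l).1 hω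
    rw [h2]
  -- value of the set integrals of the square
  have hgnorm : ∀ l, ∫ ω in A l, ‖(Ξ (L ω) ω / pL (L ω)) ^ 2‖ ∂μ
      = if L0 ≤ l then (∫ ω, (Ξ l ω) ^ 2 ∂μ) / pL l else 0 := by
    intro l
    have hψ : Measurable fun x : ℝ => (x / pL l) ^ 2 :=
      (measurable_id.div_const _).pow_const 2
    have e0 : Set.EqOn (fun ω => ‖(Ξ (L ω) ω / pL (L ω)) ^ 2‖)
        (fun ω => (Ξ l ω / pL l) ^ 2) (A l) := by
      intro ω hω
      have h2 : L ω = l := (hmemA ω l).1 hω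
      simp only [h2, Real.norm_eq_abs]
      exact abs_of_nonneg (sq_nonneg _)
    calc ∫ ω in A l, ‖(Ξ (L ω) ω / pL (L ω)) ^ 2‖ ∂μ
        = ∫ ω in A l, (Ξ l ω / pL l) ^ 2 ∂μ := setIntegral_congr_fun (hAmeas l) e0
      _ = (μ (A l)).toReal * ∫ ω, (Ξ l ω / pL l) ^ 2 ∂μ := key l _ hψ
      _ = if L0 ≤ l then (∫ ω, (Ξ l ω) ^ 2 ∂μ) / pL l else 0 := by
          have e2 : ∫ ω, (Ξ l ω / pL l) ^ 2 ∂μ = (∫ ω, (Ξ l ω) ^ 2 ∂μ) / pL l ^ 2 := by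
            simp_rw [div_pow]
            exact integral_div _ _
          rw [hμA l, e2]
          by_cases hl : L0 ≤ l
          · rw [if_pos hl, if_pos hl]
            have hp : pL l ≠ 0 := (hpLpos l hl).ne'
            field_simp
          · rw [if_neg hl, if_neg hl, zero_mul]
  have hcond' : Summable fun l => ∫ ω in A l, ‖(Ξ (L ω) ω / pL (L ω)) ^ 2‖ ∂μ :=
    hcond.congr fun l => (hgnorm l).symm
  -- global integrability of the square
  have hgint : Integrable (fun ω => (Ξ (L ω) ω / pL (L ω)) ^ 2) μ := by
    have h6 := integrableOn_iUnion_of_summable_integral_norm hg_on hcond'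
    rwa [hAunion, integrableOn_univ] at h6
  -- measurability and integrability of the estimator
  have hFmeas : Measurable fun ω => Ξ (L ω) ω / pL (L ω) := by
    have h7 : Measurable fun p : Ω × ℕ => Ξ p.2 p.1 / pL p.2 :=
      measurable_from_prod_countable_left fun l => by exact (hmeas l).div_const (pL l)
    exact h7.comp (measurable_id.prodMk hLmeas)
  have hFint : Integrable (fun ω => Ξ (L ω) ω / pL (L ω)) μ := by
    refine Integrable.mono' ((hgint.add (integrable_const 1)).div_const 2)
      hFmeas.aestronglyMeasurable ?_
    filter_upwards with ω
    have hx := sq_abs (Ξ (L ω) ω / pL (L ω))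
    have hy := abs_nonneg (Ξ (L ω) ω / pL (L ω))
    rw [Real.norm_eq_abs]
    simp only [Pi.add_apply]
    nlinarith [sq_nonneg (|Ξ (L ω) ω / pL (L ω)| - 1)]
  -- decompose the integral of the estimator
  have hFsum : HasSum (fun l => ∫ ω in A l, Ξ (L ω) ω / pL (L ω) ∂μ)
      (∫ ω, Ξ (L ω) ω / pL (L ω) ∂μ) := by
    have h8 := hasSum_integral_iUnion (μ := μ) (f := fun ω => Ξ (L ω) ω / pL (L ω))
      hAmeas hAdisj (by rw [hAunion, integrableOn_univ]; exact hFint)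
    rwa [hAunion, Measure.restrict_univ] at h8
  have hterm : ∀ l, ∫ ω in A l, Ξ (L ω) ω / pL (L ω) ∂μ
      = if L0 ≤ l then a l - a (l - 1) else 0 := by
    intro l
    have e0 : Set.EqOn (fun ω => Ξ (L ω) ω / pL (L ω)) (fun ω => Ξ l ω / pL l) (A l) := by
      intro ω hω
      have h2 : L ω = l := (hmemA ω l).1 hω
      simp only [h2]
    calc ∫ ω in A l, Ξ (L ω) ω / pL (L ω) ∂μ
        = ∫ ω in A l, Ξ l ω / pL l ∂μ := setIntegral_congr_fun (hAmeas l) e0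
      _ = (μ (A l)).toReal * ∫ ω, Ξ l ω / pL l ∂μ := key l _ (measurable_id.div_const _)
      _ = if L0 ≤ l then a l - a (l - 1) else 0 := by
          rw [hμA l, integral_div]
          by_cases hl : L0 ≤ l
          · rw [if_pos hl, if_pos hl, hmean l hl]
            have hp : pL l ≠ 0 := (hpLpos l hl).ne'
            field_simp
          · rw [if_neg hl, if_neg hl, zero_mul]
  have hFsum' : HasSum (fun l => if L0 ≤ l then a l - a (l - 1) else 0)
      (∫ ω, Ξ (L ω) ω / pL (L ω) ∂μ) := by
    rwa [show (fun l => ∫ ω in A l, Ξ (L ω) ω / pL (L ω) ∂μ)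
      = fun l => if L0 ≤ l then a l - a (l - 1) else 0 from funext hterm] at hFsum
  -- telescoping partial sums
  have hpartial : ∀ N : ℕ,
      (∑ l ∈ Finset.range (N + L0), if L0 ≤ l then a l - a (l - 1) else 0) = a (N + L0 - 1) := by
    intro N
    induction N with
    | zero =>
        rw [Finset.sum_eq_zero]
        · rw [show 0 + L0 - 1 = L0 - 1 by omega, ha0]
        · intro l hl
          exact if_neg (by simpa using Finset.mem_range.mp hl)
    | succ N ih =>
        rw [show N + 1 + L0 = (N + L0) + 1 by ring, Finset.sum_range_succ, ih,
          if_pos (by omega : L0 ≤ N + L0), show N + L0 + 1 - 1 = N + L0 by omega]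
        ring
  have h2 := hFsum'.tendsto_sum_nat
  have h3 : Tendsto (fun N : ℕ => a (N + L0 - 1)) atTop
      (nhds (∫ ω, Ξ (L ω) ω / pL (L ω) ∂μ)) := by
    have h4 : Tendsto (fun N : ℕ => ∑ l ∈ Finset.range (N + L0),
        if L0 ≤ l then a l - a (l - 1) else 0) atTop
        (nhds (∫ ω, Ξ (L ω) ω / pL (L ω) ∂μ)) := h2.comp (tendsto_add_atTop_nat L0)
    simpa only [hpartial] using h4
  have h5 : Tendsto (fun N : ℕ => a (N + L0 - 1)) atTop (nhds alim) := by
    have h6 : (fun N : ℕ => N + L0 - 1) = fun N => N + (L0 - 1) := funext fun N => by omega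
    have h7 : Tendsto (fun N : ℕ => N + L0 - 1) atTop atTop := by
      rw [h6]; exact tendsto_add_atTop_nat (L0 - 1)
    exact halim.comp h7
  exact ⟨tendsto_nhds_unique h3 h5, hgint⟩
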